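/- Let ε ∈ {−1, 1}, let L > 0, let k : ℝ → ℝ be continuous, and let E₁, E₂ : ℝ → ℝ² be continuously differentiable maps satisfying E₁' = −(1/2)k·E₁ + E₂ and E₂' = −ε·E₁ − k·E₂, such that det(E₁(t), E₂(t)) ≠ 0 for all t and such that k, E₁, E₂ are all L-periodic. Then ∫₀ᴸ k(t) dt = 0; moreover there exist t₁, t₂ ∈ [0, L) with t₁ ≠ t₂ and k(t₁) = k(t₂) = 0. -/

import Mathlib

/-- A closed nondegenerate plane curve without affine inflection point has
vanishing total general-affine curvature, hence at least two zeros of `k`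
in a period. -/
theorem stmt_2 (ε : ℝ) (hε : ε = 1 ∨ ε = -1) (L : ℝ) (hL : 0 < L)
    (k : ℝ → ℝ) (hk : Continuous k)
    (E₁ E₂ : ℝ → Fin 2 → ℝ) (hE₁ : ContDiff ℝ 1 E₁) (hE₂ : ContDiff ℝ 1 E₂)
    (hE₁' : ∀ t, deriv E₁ t = (-(1/2) * k t) • E₁ t + E₂ t)
    (hE₂' : ∀ t, deriv E₂ t = (-ε) • E₁ t - k t • E₂ t)
    (hdet : ∀ t, E₁ t 0 * E₂ t 1 - E₁ t 1 * E₂ t 0 ≠ 0)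
    (hkp : Function.Periodic k L)
    (hE₁p : Function.Periodic E₁ L) (hE₂p : Function.Periodic E₂ L) :
    (∫ t in (0:ℝ)..L, k t) = 0 ∧
    ∃ t₁ t₂ : ℝ, t₁ ∈ Set.Ico (0:ℝ) L ∧ t₂ ∈ Set.Ico (0:ℝ) L ∧ t₁ ≠ t₂ ∧
      k t₁ = 0 ∧ k t₂ = 0 := by
  -- determinant function
  set D : ℝ → ℝ := fun t => E₁ t 0 * E₂ t 1 - E₁ t 1 * E₂ t 0 with hD
  -- derivative of D
  have hd1 : ∀ t (i : Fin 2), HasDerivAt (fun s => E₁ s i) (deriv E₁ t i) t := by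
    intro t i
    exact hasDerivAt_pi.1 ((hE₁.differentiable one_ne_zero t).hasDerivAt) i
  have hd2 : ∀ t (i : Fin 2), HasDerivAt (fun s => E₂ s i) (deriv E₂ t i) t := by
    intro t i
    exact hasDerivAt_pi.1 ((hE₂.differentiable one_ne_zero t).hasDerivAt) i
  have hD' : ∀ t, HasDerivAt D (-(3/2) * k t * D t) t := by
    intro t
    have h1 : ∀ i : Fin 2, deriv E₁ t i = (-(1/2) * k t) * E₁ t i + E₂ t i := by
      intro i; rw [hE₁']; simp
    have h2 : ∀ i : Fin 2, deriv E₂ t i = (-ε) * E₁ t i - k t * E₂ t i := by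
      intro i; rw [hE₂']; simp
    have := (((hd1 t 0).mul (hd2 t 1)).sub ((hd1 t 1).mul (hd2 t 0)))
    refine this.congr_deriv ?_
    rw [h1 0, h1 1, h2 0, h2 1]; simp only [hD]; ring
  -- primitive of k
  set K : ℝ → ℝ := fun t => ∫ s in (0:ℝ)..t, k s with hK
  have hK' : ∀ t, HasDerivAt K (k t) t := fun t =>
    (hk.integral_hasStrictDerivAt 0 t).hasDerivAt
  -- g = D * exp((3/2) K) is constant
  set g : ℝ → ℝ := fun t => D t * Real.exp ((3/2) * K t) with hg
  have hg' : ∀ t, HasDerivAt g 0 t := by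
    intro t
    have he : HasDerivAt (fun s => Real.exp ((3/2) * K s))
        (Real.exp ((3/2) * K t) * ((3/2) * k t)) t :=
      (((hK' t).const_mul (3/2 : ℝ)).exp)
    have := (hD' t).mul he
    exact this.congr_deriv (by ring)
  have hgc : ∀ s t : ℝ, g s = g t := by
    intro s t
    exact is_const_of_deriv_eq_zero (fun x => (hg' x).differentiableAt)
      (fun x => (hg' x).deriv) s t
  -- periodicity of D
  have hDL : D L = D 0 := by
    have e1 : E₁ L = E₁ 0 := by simpa using hE₁p 0
    have e2 : E₂ L = E₂ 0 := by simpa using hE₂p 0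
    simp [hD, e1, e2]
  -- total curvature is zero
  have hI : (∫ t in (0:ℝ)..L, k t) = 0 := by
    have h0 : g 0 = D 0 := by simp [hg, hK]
    have hLg : g L = D 0 * Real.exp ((3/2) * K L) := by
      show D L * _ = _
      rw [hDL]
    have hthis := hgc L 0
    rw [hLg, h0] at hthis
    have hD0 : D 0 ≠ 0 := hdet 0
    have hexp : Real.exp ((3/2) * K L) = 1 := by
      have : D 0 * Real.exp ((3/2) * K L) = D 0 * 1 := by rw [mul_one]; exact hthis
      exact mul_left_cancel₀ hD0 this
    rw [← Real.exp_zero] at hexp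
    have h32 := Real.exp_eq_exp.mp hexp
    have hKL : K L = 0 := by linarith
    exact hKL
  refine ⟨hI, ?_⟩
  -- integrability
  have hint : ∀ a b : ℝ, IntervalIntegrable k MeasureTheory.volume a b := fun a b =>
    hk.intervalIntegrable a b
  -- sign constancy on intervals without zeros
  have hsign : ∀ a b : ℝ, a < b → (∀ x ∈ Set.Ioo a b, k x ≠ 0) →
      (∫ t in a..b, k t) ≠ 0 := by
    intro a b hab hne
    have : (∀ x ∈ Set.Ioo a b, 0 < k x) ∨ (∀ x ∈ Set.Ioo a b, k x < 0) := by
      by_contra h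
      push_neg at h
      obtain ⟨⟨x, hx, hxle⟩, ⟨y, hy, hyle⟩⟩ := h
      have hxneg : k x < 0 := lt_of_le_of_ne hxle (hne x hx)
      have hypos : 0 < k y := lt_of_le_of_ne hyle (Ne.symm (hne y hy))
      have : (0:ℝ) ∈ Set.uIcc (k x) (k y) :=
        Set.mem_uIcc.2 (Or.inl ⟨hxneg.le, hypos.le⟩)
      have hsub := intermediate_value_uIcc (a := x) (b := y) (f := k)
        (hk.continuousOn)
      obtain ⟨z, hz, hz0⟩ := hsub this
      have hzIoo : z ∈ Set.Ioo a b := by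
        rcases Set.mem_uIcc.1 hz with ⟨h1, h2⟩ | ⟨h1, h2⟩
        · exact ⟨lt_of_lt_of_le hx.1 h1, lt_of_le_of_lt h2 hy.2⟩
        · exact ⟨lt_of_lt_of_le hy.1 h1, lt_of_le_of_lt h2 hx.2⟩
      exact hne z hzIoo hz0
    rcases this with hpos | hneg
    · exact (intervalIntegral.intervalIntegral_pos_of_pos_on (hint a b) hpos hab).ne'
    · have : 0 < ∫ t in a..b, -k t :=
        intervalIntegral.intervalIntegral_pos_of_pos_on ((hint a b).neg)
          (fun x hx => neg_pos.2 (hneg x hx)) hab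
      rw [intervalIntegral.integral_neg] at this
      intro h; rw [h] at this; simp at this
    -- first zero
  have hz1 : ∃ t₀ ∈ Set.Ico (0:ℝ) L, k t₀ = 0 := by
    by_contra h
    push_neg at h
    exact hsign 0 L hL (fun x hx => h x ⟨hx.1.le, hx.2⟩) hI
  obtain ⟨t₀, ht₀, hkt₀⟩ := hz1
  -- second zero
  by_contra hcon
  push_neg at hcon
  have honly : ∀ x ∈ Set.Ico (0:ℝ) L, x ≠ t₀ → k x ≠ 0 := fun x hx hne =>
    hcon t₀ x ht₀ hx (Ne.symm hne) hkt₀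
  have hIoo : ∀ x ∈ Set.Ioo t₀ (t₀ + L), k x ≠ 0 := by
    intro x hx
    by_cases hxL : x < L
    · exact honly x ⟨le_trans ht₀.1 hx.1.le, hxL⟩ (ne_of_gt hx.1)
    · push_neg at hxL
      have h1 : x - L < t₀ := by linarith [hx.2]
      have h2 : x - L ∈ Set.Ico (0:ℝ) L := ⟨by linarith, by linarith [ht₀.2]⟩
      have hkx : k x = k (x - L) := by
        have := hkp (x - L)
        rwa [sub_add_cancel] at this
      rw [hkx]
      exact honly (x - L) h2 (ne_of_lt h1)
  have hne := hsign t₀ (t₀ + L) (by linarith) hIoo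
  apply hne
  have := hkp.intervalIntegral_add_eq t₀ 0
  rwa [zero_add, hI] at this
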